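/- Let p ≥ 3 and n ≥ p + 1 be integers, and let c be a rainbow cancellative edge-coloring of K_n^(p). Let X be a (p−1)-element vertex set and let α1 ≠ α2 be two colors such that for every vertex v outside X the edge X ∪ {v} has color α1 or α2, and both colors occur; for i = 1, 2 let A_i = {v ∉ X : c(X ∪ {v}) = α_i}. Then there exists i ∈ {1, 2} such that every edge entirely contained in A_i has color α1 or α2. -/

import Mathlib

set_option maxHeartbeats 1000000


/-- The number of colors used by the edge-coloring `col` on the `p`-element
subsets (edges) of the vertex set `Fin n`. -/
def numColors (n p : ℕ) (col : Finset (Fin n) → ℕ) : ℕ :=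
  (((Finset.univ : Finset (Finset (Fin n))).filter (fun e => e.card = p)).image col).card

/-- An edge-coloring of `K_n^(p)` is rainbow cancellative if there are no three
edges `A, B, C` with pairwise distinct colors such that `A △ B ⊆ C`. -/
def RainbowCancellative (n p : ℕ) (col : Finset (Fin n) → ℕ) : Prop :=
  ∀ A B C : Finset (Fin n), A.card = p → B.card = p → C.card = p →
    col A ≠ col B → col A ≠ col C → col B ≠ col C →
    ¬ ((A \ B) ∪ (B \ A) ⊆ C)

lemma tri_of {n p : ℕ} {col : Finset (Fin n) → ℕ} (hc : RainbowCancellative n p col)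
    {A B C : Finset (Fin n)} (hA : A.card = p) (hB : B.card = p) (hC : C.card = p)
    (hsub : (A \ B) ∪ (B \ A) ⊆ C) (hAB : col A ≠ col B) :
    col C = col A ∨ col C = col B := by
  by_contra h
  push_neg at h
  exact hc A B C hA hB hC hAB (Ne.symm h.1) (Ne.symm h.2) hsub

lemma side_contra {n p : ℕ} (hp : 3 ≤ p) {col : Finset (Fin n) → ℕ}
    (hc : RainbowCancellative n p col) {X : Finset (Fin n)} (hX : X.card = p - 1)
    {αa αb : ℕ} (hab : αa ≠ αb)
    {f : Finset (Fin n)} (hf : f.card = p) (hfX : ∀ w ∈ f, w ∉ X)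
    (hfall : ∀ w ∈ f, col (insert w X) = αb)
    (hfa : col f ≠ αa) (hfb : col f ≠ αb)
    {v0 : Fin n} (hv0X : v0 ∉ X) (hv0f : v0 ∉ f)
    (hmix : ∀ w ∈ f, ∀ W : Finset (Fin n), W.card = p → v0 ∈ W → w ∈ W → col W = αa) :
    False := by
  have step : ∀ k, k ≤ p - 1 → ∀ S T : Finset (Fin n), S ⊆ X → T ⊆ f →
      S.card = k → T.card = k → col ((f \ T) ∪ S) = col f := by
    intro k
    induction k with
    | zero =>
      intro _ S T _ _ hS hT
      rw [Finset.card_eq_zero] at hS hT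
      subst hS; subst hT; simp
    | succ k ih =>
      intro hk S T hSX hTf hScard hTcard
      obtain ⟨x2, hx2S⟩ := Finset.card_pos.1 (by omega : 0 < S.card)
      obtain ⟨w2, hw2T⟩ := Finset.card_pos.1 (by omega : 0 < T.card)
      have hx2X : x2 ∈ X := hSX hx2S
      have hw2f : w2 ∈ f := hTf hw2T
      have hw2X : w2 ∉ X := hfX w2 hw2f
      have hw2v0 : w2 ≠ v0 := fun h => hv0f (h ▸ hw2f)
      set S' := S.erase x2 with hS'def
      set T' := T.erase w2 with hT'def
      have hS'X : S' ⊆ X := (Finset.erase_subset _ _).trans hSX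
      have hT'f : T' ⊆ f := (Finset.erase_subset _ _).trans hTf
      have hS'card : S'.card = k := by
        rw [hS'def, Finset.card_erase_of_mem hx2S, hScard]
        omega
      have hT'card : T'.card = k := by
        rw [hT'def, Finset.card_erase_of_mem hw2T, hTcard]
        omega
      have hA := ih (by omega) S' T' hS'X hT'f hS'card hT'card
      set A := (f \ T') ∪ S' with hAdef
      set B := (f \ T) ∪ S with hBdef
      -- disjointness of the pieces
      have hdisj : ∀ (T₀ S₀ : Finset (Fin n)), S₀ ⊆ X → Disjoint (f \ T₀) S₀ := by
        intro T₀ S₀ hS₀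
        refine Finset.disjoint_left.2 fun a ha haS => ?_
        exact hfX a (Finset.mem_sdiff.1 ha).1 (hS₀ haS)
      have hAcard : A.card = p := by
        rw [hAdef, Finset.card_union_of_disjoint (hdisj _ _ hS'X),
          Finset.card_sdiff_of_subset hT'f, hf, hT'card, hS'card]
        omega
      have hBcard : B.card = p := by
        rw [hBdef, Finset.card_union_of_disjoint (hdisj _ _ hSX),
          Finset.card_sdiff_of_subset hTf, hf, hTcard, hScard]
        omega
      -- the symmetric difference of A and B
      have hsym : (A \ B) ∪ (B \ A) ⊆ {w2, x2} := by
        intro a ha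
        rcases Finset.mem_union.1 ha with h | h
        · obtain ⟨haA, haB⟩ := Finset.mem_sdiff.1 h
          rcases Finset.mem_union.1 haA with h1 | h1
          · obtain ⟨haf, haT'⟩ := Finset.mem_sdiff.1 h1
            have haT : a ∈ T := by
              by_contra hx
              exact haB (Finset.mem_union_left _ (Finset.mem_sdiff.2 ⟨haf, hx⟩))
            have : a = w2 := by
              by_contra hne
              exact haT' (Finset.mem_erase.2 ⟨hne, haT⟩)
            simp [this]
          · exact absurd (Finset.mem_union_right _ (Finset.mem_of_mem_erase h1)) haB
        · obtain ⟨haB, haA⟩ := Finset.mem_sdiff.1 h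
          rcases Finset.mem_union.1 haB with h1 | h1
          · obtain ⟨haf, haT⟩ := Finset.mem_sdiff.1 h1
            have : a ∉ T' := fun hx => haT (Finset.mem_of_mem_erase hx)
            exact absurd (Finset.mem_union_left _ (Finset.mem_sdiff.2 ⟨haf, this⟩)) haA
          · have : a = x2 := by
              by_contra hne
              exact haA (Finset.mem_union_right _ (Finset.mem_erase.2 ⟨hne, h1⟩))
            simp [this]
      -- first container : insert w2 X, color αb
      have hC1card : (insert w2 X).card = p := by
        rw [Finset.card_insert_of_notMem hw2X, hX]; omega
      have hC1sub : (A \ B) ∪ (B \ A) ⊆ insert w2 X := by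
        refine hsym.trans ?_
        intro a ha
        rcases Finset.mem_insert.1 ha with h | h
        · exact h ▸ Finset.mem_insert_self _ _
        · rw [Finset.mem_singleton] at h
          exact Finset.mem_insert_of_mem (h ▸ hx2X)
      have hC1col : col (insert w2 X) = αb := hfall w2 hw2f
      -- second container : insert w2 (insert v0 (X.erase x3)), color αa
      obtain ⟨x3, hx3X, hx3ne⟩ :=
        Finset.exists_mem_ne (by omega : 1 < X.card) x2
      have hv0e : v0 ∉ X.erase x3 := fun h => hv0X (Finset.mem_of_mem_erase h)
      have hw2i : w2 ∉ insert v0 (X.erase x3) := by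
        intro h
        rcases Finset.mem_insert.1 h with h | h
        · exact hw2v0 h
        · exact hw2X (Finset.mem_of_mem_erase h)
      have hC2card : (insert w2 (insert v0 (X.erase x3))).card = p := by
        rw [Finset.card_insert_of_notMem hw2i, Finset.card_insert_of_notMem hv0e,
          Finset.card_erase_of_mem hx3X, hX]
        omega
      have hC2sub : (A \ B) ∪ (B \ A) ⊆ insert w2 (insert v0 (X.erase x3)) := by
        refine hsym.trans ?_
        intro a ha
        rcases Finset.mem_insert.1 ha with h | h
        · exact h ▸ Finset.mem_insert_self _ _
        · rw [Finset.mem_singleton] at h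
          subst h
          exact Finset.mem_insert_of_mem
            (Finset.mem_insert_of_mem (Finset.mem_erase.2 ⟨Ne.symm hx3ne, hx2X⟩))
      have hC2col : col (insert w2 (insert v0 (X.erase x3))) = αa :=
        hmix w2 hw2f _ hC2card
          (Finset.mem_insert_of_mem (Finset.mem_insert_self _ _))
          (Finset.mem_insert_self _ _)
      -- conclude
      by_contra hBne
      have hne : col A ≠ col B := by rw [hA]; exact fun h => hBne h.symm
      have h1 := tri_of hc hAcard hBcard hC1card hC1sub hne
      have h2 := tri_of hc hAcard hBcard hC2card hC2sub hne
      rw [hC1col] at h1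
      rw [hC2col] at h2
      rw [hA] at h1 h2
      rcases h1 with h1 | h1
      · exact hfb h1.symm
      · rcases h2 with h2 | h2
        · exact hfa h2.symm
        · exact hab (h2.trans h1.symm)
  obtain ⟨T, hTsub, hTcard⟩ := Finset.exists_subset_card_eq (s := f) (n := p - 1) (by omega)
  have hfin := step (p - 1) le_rfl X T (Finset.Subset.refl X) hTsub hX hTcard
  have hcard1 : (f \ T).card = 1 := by
    rw [Finset.card_sdiff_of_subset hTsub, hf, hTcard]; omega
  obtain ⟨u, hu⟩ := Finset.card_eq_one.1 hcard1
  have huf : u ∈ f := by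
    have : u ∈ f \ T := hu ▸ Finset.mem_singleton_self u
    exact (Finset.mem_sdiff.1 this).1
  rw [hu, ← Finset.insert_eq] at hfin
  exact hfb (hfin.symm.trans (hfall u huf))

/-- Claim 3.5: in the situation above, one of the two parts `A1, A2` spans only
edges colored `α1` or `α2`. -/
theorem one_part_two_colors (n p : ℕ) (hp : 3 ≤ p) (hn : p + 1 ≤ n)
    (col : Finset (Fin n) → ℕ) (hc : RainbowCancellative n p col)
    (X : Finset (Fin n)) (hX : X.card = p - 1)
    (α1 α2 : ℕ) (hα : α1 ≠ α2)
    (hall : ∀ v : Fin n, v ∉ X → col (insert v X) = α1 ∨ col (insert v X) = α2)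
    (h1 : ∃ v : Fin n, v ∉ X ∧ col (insert v X) = α1)
    (h2 : ∃ v : Fin n, v ∉ X ∧ col (insert v X) = α2)
    (A1 A2 : Finset (Fin n))
    (hA1 : ∀ v : Fin n, v ∈ A1 ↔ v ∉ X ∧ col (insert v X) = α1)
    (hA2 : ∀ v : Fin n, v ∈ A2 ↔ v ∉ X ∧ col (insert v X) = α2) :
    (∀ f : Finset (Fin n), f.card = p → f ⊆ A1 → col f = α1 ∨ col f = α2) ∨
    (∀ f : Finset (Fin n), f.card = p → f ⊆ A2 → col f = α1 ∨ col f = α2) := by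
  by_contra hcon
  push_neg at hcon
  obtain ⟨⟨f1, hf1card, hf1sub, hf1a, hf1b⟩, ⟨f2, hf2card, hf2sub, hf2a, hf2b⟩⟩ := hcon
  -- basic facts about the parts
  have hm1 : ∀ v ∈ f1, v ∉ X ∧ col (insert v X) = α1 := fun v hv => (hA1 v).1 (hf1sub hv)
  have hm2 : ∀ v ∈ f2, v ∉ X ∧ col (insert v X) = α2 := fun v hv => (hA2 v).1 (hf2sub hv)
  have h12 : ∀ v, v ∈ f1 → v ∉ f2 := by
    intro v hv hv2
    exact hα (((hm1 v hv).2.symm).trans (hm2 v hv2).2)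
  have hins : ∀ v : Fin n, v ∉ X → (insert v X).card = p := by
    intro v hv
    rw [Finset.card_insert_of_notMem hv, hX]; omega
  -- key pointwise lemma : for v ∈ f1, u ∈ f2 all p-sets containing v and u share a color
  have key : ∀ v ∈ f1, ∀ u ∈ f2, ∃ γ, (γ = α1 ∨ γ = α2) ∧
      ∀ W : Finset (Fin n), W.card = p → v ∈ W → u ∈ W → col W = γ := by
    intro v hv u hu
    have hvX : v ∉ X := (hm1 v hv).1
    have huX : u ∉ X := (hm2 u hu).1
    have huf1 : u ∉ f1 := fun h => h12 u h hu
    set C := insert u (f1.erase v) with hCdef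
    have huC : u ∉ f1.erase v := fun h => huf1 (Finset.mem_of_mem_erase h)
    have hCcard : C.card = p := by
      rw [hCdef, Finset.card_insert_of_notMem huC, Finset.card_erase_of_mem hv, hf1card]
      omega
    obtain ⟨w, hwf1, hwv⟩ :=
      Finset.exists_mem_ne (by omega : 1 < f1.card) v
    have hwX : w ∉ X := (hm1 w hwf1).1
    -- first triple: (insert w X, insert u X, C)
    have hsub1 : (insert w X \ insert u X) ∪ (insert u X \ insert w X) ⊆ C := by
      intro a ha
      rcases Finset.mem_union.1 ha with h | h
      · obtain ⟨ha1, ha2⟩ := Finset.mem_sdiff.1 h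
        have haX : a ∉ X := fun hx => ha2 (Finset.mem_insert_of_mem hx)
        have haw : a = w := by
          rcases Finset.mem_insert.1 ha1 with h' | h'
          · exact h'
          · exact absurd h' haX
        subst haw
        exact Finset.mem_insert_of_mem (Finset.mem_erase.2 ⟨hwv, hwf1⟩)
      · obtain ⟨ha1, ha2⟩ := Finset.mem_sdiff.1 h
        have haX : a ∉ X := fun hx => ha2 (Finset.mem_insert_of_mem hx)
        have hau : a = u := by
          rcases Finset.mem_insert.1 ha1 with h' | h'
          · exact h'
          · exact absurd h' haX
        subst hau
        exact Finset.mem_insert_self _ _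
    have hne12 : col (insert w X) ≠ col (insert u X) := by
      rw [(hm1 w hwf1).2, (hm2 u hu).2]; exact hα
    have hγ := tri_of hc (hins w hwX) (hins u huX) hCcard hsub1 hne12
    rw [(hm1 w hwf1).2, (hm2 u hu).2] at hγ
    refine ⟨col C, hγ, ?_⟩
    intro W hWcard hvW huW
    have hCne : col f1 ≠ col C := by
      rcases hγ with h | h
      · rw [h]; exact hf1a
      · rw [h]; exact hf1b
    -- second triple : (f1, C, W)
    have hsub2 : (f1 \ C) ∪ (C \ f1) ⊆ W := by
      intro a ha
      rcases Finset.mem_union.1 ha with h | h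
      · obtain ⟨ha1, ha2⟩ := Finset.mem_sdiff.1 h
        have : a = v := by
          by_contra hne
          exact ha2 (Finset.mem_insert_of_mem (Finset.mem_erase.2 ⟨hne, ha1⟩))
        exact this ▸ hvW
      · obtain ⟨ha1, ha2⟩ := Finset.mem_sdiff.1 h
        rcases Finset.mem_insert.1 ha1 with h' | h'
        · exact h' ▸ huW
        · exact absurd (Finset.mem_of_mem_erase h') ha2
    have hW1 := tri_of hc hf1card hCcard hWcard hsub2 hCne
    -- third triple : (insert v X, insert u X, W)
    have hsub3 : (insert v X \ insert u X) ∪ (insert u X \ insert v X) ⊆ W := by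
      intro a ha
      rcases Finset.mem_union.1 ha with h | h
      · obtain ⟨ha1, ha2⟩ := Finset.mem_sdiff.1 h
        have haX : a ∉ X := fun hx => ha2 (Finset.mem_insert_of_mem hx)
        rcases Finset.mem_insert.1 ha1 with h' | h'
        · exact h' ▸ hvW
        · exact absurd h' haX
      · obtain ⟨ha1, ha2⟩ := Finset.mem_sdiff.1 h
        have haX : a ∉ X := fun hx => ha2 (Finset.mem_insert_of_mem hx)
        rcases Finset.mem_insert.1 ha1 with h' | h'
        · exact h' ▸ huW
        · exact absurd h' haX
    have hne3 : col (insert v X) ≠ col (insert u X) := by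
      rw [(hm1 v hv).2, (hm2 u hu).2]; exact hα
    have hW3 := tri_of hc (hins v hvX) (hins u huX) hWcard hsub3 hne3
    rw [(hm1 v hv).2, (hm2 u hu).2] at hW3
    rcases hW1 with h | h
    · exfalso
      rcases hW3 with h3 | h3
      · exact hf1a (h.symm.trans h3)
      · exact hf1b (h.symm.trans h3)
    · exact h
  -- pick base points
  obtain ⟨v0, hv0⟩ := Finset.card_pos.1 (by omega : 0 < f1.card)
  obtain ⟨u0, hu0⟩ := Finset.card_pos.1 (by omega : 0 < f2.card)
  obtain ⟨γ0, hγ0, hP0⟩ := key v0 hv0 u0 hu0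
  -- the common color is the same for all pairs
  have key2 : ∀ v ∈ f1, ∀ u ∈ f2, ∀ W : Finset (Fin n),
      W.card = p → v ∈ W → u ∈ W → col W = γ0 := by
    intro v hv u hu W hWcard hvW huW
    obtain ⟨γ1, _, hP1⟩ := key v0 hv0 u hu
    obtain ⟨γ2, _, hP2⟩ := key v hv u hu
    -- connect (v0,u0) to (v0,u) via an edge containing v0, u0, u
    have hγ1 : γ1 = γ0 := by
      have hcard2 : ({u, u0} : Finset (Fin n)).card ≤ 2 :=
        (Finset.card_insert_le _ _).trans (by simp)
      have hne : (f2 \ {u, u0}).Nonempty := by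
        rw [← Finset.card_pos]
        have := Finset.card_le_card_sdiff_add_card (s := f2) (t := ({u, u0} : Finset (Fin n)))
        omega
      obtain ⟨w, hw⟩ := hne
      obtain ⟨hwf2, hwne⟩ := Finset.mem_sdiff.1 hw
      simp only [Finset.mem_insert, Finset.mem_singleton, not_or] at hwne
      have hv0f2 : v0 ∉ f2 := fun h => h12 v0 hv0 h
      have hv0e : v0 ∉ f2.erase w := fun h => hv0f2 (Finset.mem_of_mem_erase h)
      set Z := insert v0 (f2.erase w) with hZdef
      have hZcard : Z.card = p := by
        rw [hZdef, Finset.card_insert_of_notMem hv0e,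
          Finset.card_erase_of_mem hwf2, hf2card]
        omega
      have hv0Z : v0 ∈ Z := Finset.mem_insert_self _ _
      have huZ : u ∈ Z :=
        Finset.mem_insert_of_mem (Finset.mem_erase.2 ⟨fun h => hwne.1 h.symm, hu⟩)
      have hu0Z : u0 ∈ Z :=
        Finset.mem_insert_of_mem (Finset.mem_erase.2 ⟨fun h => hwne.2 h.symm, hu0⟩)
      rw [← hP1 Z hZcard hv0Z huZ, hP0 Z hZcard hv0Z hu0Z]
    -- connect (v0,u) to (v,u) via an edge containing v, v0, u
    have hγ2 : γ2 = γ1 := by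
      have hne : (f1 \ {v, v0}).Nonempty := by
        rw [← Finset.card_pos]
        have hcard2 : ({v, v0} : Finset (Fin n)).card ≤ 2 :=
          (Finset.card_insert_le _ _).trans (by simp)
        have := Finset.card_le_card_sdiff_add_card (s := f1) (t := ({v, v0} : Finset (Fin n)))
        omega
      obtain ⟨w, hw⟩ := hne
      obtain ⟨hwf1, hwne⟩ := Finset.mem_sdiff.1 hw
      simp only [Finset.mem_insert, Finset.mem_singleton, not_or] at hwne
      have huf1 : u ∉ f1 := fun h => h12 u h hu
      have hue : u ∉ f1.erase w := fun h => huf1 (Finset.mem_of_mem_erase h)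
      set Z := insert u (f1.erase w) with hZdef
      have hZcard : Z.card = p := by
        rw [hZdef, Finset.card_insert_of_notMem hue,
          Finset.card_erase_of_mem hwf1, hf1card]
        omega
      have huZ : u ∈ Z := Finset.mem_insert_self _ _
      have hvZ : v ∈ Z :=
        Finset.mem_insert_of_mem (Finset.mem_erase.2 ⟨fun h => hwne.1 h.symm, hv⟩)
      have hv0Z : v0 ∈ Z :=
        Finset.mem_insert_of_mem (Finset.mem_erase.2 ⟨fun h => hwne.2 h.symm, hv0⟩)
      rw [← hP2 Z hZcard hvZ huZ, hP1 Z hZcard hv0Z huZ]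
    rw [hP2 W hWcard hvW huW, hγ2, hγ1]
  -- now finish by case analysis on γ0
  rcases hγ0 with hγ0 | hγ0
  · -- γ0 = α1 : apply side_contra to f2, with helper vertex v0 ∈ f1
    refine side_contra hp hc hX hα hf2card (fun w hw => (hm2 w hw).1)
      (fun w hw => (hm2 w hw).2) hf2a hf2b ((hm1 v0 hv0).1)
      (fun h => h12 v0 hv0 h) ?_
    intro w hw W hWcard hv0W hwW
    rw [key2 v0 hv0 w hw W hWcard hv0W hwW, hγ0]
  · -- γ0 = α2 : apply side_contra to f1, with helper vertex u0 ∈ f2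
    refine side_contra hp hc hX hα.symm hf1card (fun w hw => (hm1 w hw).1)
      (fun w hw => (hm1 w hw).2) hf1b hf1a ((hm2 u0 hu0).1)
      (fun h => h12 u0 h hu0)  ?_
    intro w hw W hWcard hu0W hwW
    rw [key2 w hw u0 hu0 W hWcard hwW hu0W, hγ0]
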